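/- Let (u,v) and (u′,v′) be nonzero pairs in ℂ², and let q = u + v·j and q′ = u′ + v′·j be the corresponding quaternions. Then q⁻¹ · i · q = q′⁻¹ · i · q′ if and only if there exists a nonzero complex number λ with (u′,v′) = (λu, λv). In other words, the Hopf map (u,v) ↦ (u+vj)⁻¹ i (u+vj) has fibers exactly the complex lines through the origin in ℂ² − {0}. -/

import Mathlib

/-- The quaternion `u + v·j` attached to a pair `(u,v) ∈ ℂ²`, with components
`(Re u, Im u, Re v, Im v)` in the basis `(1, i, j, k)`. -/
def toQuat (u v : ℂ) : Quaternion ℝ := ⟨u.re, u.im, v.re, v.im⟩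

/-- The quaternion `i`, with components `(0,1,0,0)`. -/
def qi : Quaternion ℝ := ⟨0, 1, 0, 0⟩

lemma toQuat_eq_zero {u v : ℂ} : toQuat u v = 0 ↔ u = 0 ∧ v = 0 := by
  simp only [Quaternion.ext_iff]
  simp [toQuat, Complex.ext_iff]
  tauto

lemma toQuat_ne_zero {u v : ℂ} (h : (u, v) ≠ (0, 0)) : toQuat u v ≠ 0 := by
  rw [Ne, toQuat_eq_zero]
  intro ⟨h1, h2⟩
  exact h (by simp [h1, h2])

lemma toQuat_mul (a u v : ℂ) :
    toQuat a 0 * toQuat u v = toQuat (a * u) (a * v) := by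
  ext <;>
    simp only [Quaternion.re_mul, Quaternion.imI_mul, Quaternion.imJ_mul,
      Quaternion.imK_mul] <;>
    simp [toQuat, Complex.mul_re, Complex.mul_im]

lemma qi_commute (a : ℂ) : qi * toQuat a 0 = toQuat a 0 * qi := by
  ext <;>
    simp only [Quaternion.re_mul, Quaternion.imI_mul, Quaternion.imJ_mul,
      Quaternion.imK_mul] <;>
    simp [toQuat, qi]

/-- for nonzero pairs `(u,v), (u′,v′) ∈ ℂ²` with associated quaternions
`q = u+v·j`, `q′ = u′+v′·j`, one has `q⁻¹·i·q = q′⁻¹·i·q′` iff `(u′,v′) = (λu, λv)`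
for some nonzero complex `λ`: the Hopf map has fibers the complex lines through `0`. -/
theorem stmt5 (u v u' v' : ℂ) (h : (u, v) ≠ (0, 0)) (h' : (u', v') ≠ (0, 0)) :
    (toQuat u v)⁻¹ * qi * toQuat u v = (toQuat u' v')⁻¹ * qi * toQuat u' v' ↔
      ∃ lam : ℂ, lam ≠ 0 ∧ u' = lam * u ∧ v' = lam * v := by
  have hq : toQuat u v ≠ 0 := toQuat_ne_zero h
  have hq' : toQuat u' v' ≠ 0 := toQuat_ne_zero h'
  constructor
  · intro heq
    -- derive that w = q' * q⁻¹ commutes with qi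
    set q := toQuat u v
    set q' := toQuat u' v'
    have hw : qi * (q' * q⁻¹) = (q' * q⁻¹) * qi := by
      have h1 : qi * q' = q' * (q⁻¹ * qi * q) := by
        rw [heq, ← mul_assoc, ← mul_assoc, mul_inv_cancel₀ hq', one_mul]
      rw [← mul_assoc, h1, mul_assoc q' _ q⁻¹, mul_assoc (q⁻¹ * qi) q q⁻¹,
        mul_inv_cancel₀ hq, mul_one, ← mul_assoc]
    set w := q' * q⁻¹ with hwdef
    have hwJ : w.imJ = 0 ∧ w.imK = 0 := by
      have h2 := congrArg QuaternionAlgebra.imJ hw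
      have h3 := congrArg QuaternionAlgebra.imK hw
      simp only [Quaternion.imJ_mul, Quaternion.imK_mul] at h2 h3
      simp [qi] at h2 h3
      constructor <;> linarith
    set lam : ℂ := ⟨w.re, w.imI⟩ with hlam
    have hwq : w = toQuat lam 0 := by
      ext <;> simp [toQuat, hlam, hwJ.1, hwJ.2]
    have hwne : w ≠ 0 := by
      intro h0
      apply hq'
      have : q' = w * q := by rw [hwdef, mul_assoc, inv_mul_cancel₀ hq, mul_one]
      rw [this, h0, zero_mul]
    refine ⟨lam, ?_, ?_, ?_⟩
    · intro h0
      apply hwne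
      rw [hwq, h0]
      simp [toQuat]
      rfl
    all_goals {
      have : q' = w * q := by rw [hwdef, mul_assoc, inv_mul_cancel₀ hq, mul_one]
      rw [hwq, toQuat_mul] at this
      have h1 := congrArg QuaternionAlgebra.re this
      have h2 := congrArg QuaternionAlgebra.imI this
      have h3 := congrArg QuaternionAlgebra.imJ this
      have h4 := congrArg QuaternionAlgebra.imK this
      simp [toQuat] at h1 h2 h3 h4
      first
      | exact Complex.ext h1 h2
      | exact Complex.ext h3 h4
    }
  · rintro ⟨lam, hl, hu, hv⟩
    have hc : toQuat lam 0 ≠ 0 := by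
      rw [Ne, toQuat_eq_zero]; tauto
    have key : toQuat u' v' = toQuat lam 0 * toQuat u v := by
      rw [toQuat_mul, hu, hv]
    rw [key, mul_inv_rev]
    have e1 : (toQuat lam 0)⁻¹ * qi * toQuat lam 0 = qi := by
      rw [mul_assoc, qi_commute, ← mul_assoc, inv_mul_cancel₀ hc, one_mul]
    have e2 : (toQuat u v)⁻¹ * (toQuat lam 0)⁻¹ * qi * (toQuat lam 0 * toQuat u v)
        = (toQuat u v)⁻¹ * ((toQuat lam 0)⁻¹ * qi * toQuat lam 0) * toQuat u v := by
      simp only [mul_assoc]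
    rw [e2, e1]
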